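/- For n ≥ 1 and triples (p,q,r), (p',q',r') ∈ ℕ³ with p+q+r ≤ n and p'+q'+r' ≤ n, the commutator B_{p,q,r}·B_{p',q',r'} − B_{p',q',r'}·B_{p,q,r} lies in the ℂ-linear span of the family {B_{p̃,q̃,r̃} : p̃,q̃,r̃ ∈ ℕ, p̃+q̃+r̃ ≤ n}. Moreover, all coefficients in this expansion are purely imaginary; equivalently, i·(B_{p,q,r}·B_{p',q',r'} − B_{p',q',r'}·B_{p,q,r}) lies in the ℝ-linear span of that family. (The commutator of two Pauli orbits closes in the Pauli orbit basis.) -/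

import Mathlib

open Matrix

open Finset

/-- The four Pauli letters `I, X, Y, Z`. -/
inductive PauliLetter : Type
  | I | X | Y | Z
  deriving DecidableEq

instance : Fintype PauliLetter :=
  ⟨{PauliLetter.I, PauliLetter.X, PauliLetter.Y, PauliLetter.Z}, fun x => by cases x <;> simp⟩

/-- The 2×2 complex matrix associated to a Pauli letter. -/
def PauliLetter.toMatrix : PauliLetter → Matrix (Fin 2) (Fin 2) ℂ
  | .I => !![1, 0; 0, 1]
  | .X => !![0, 1; 1, 0]
  | .Y => !![0, -Complex.I; Complex.I, 0]
  | .Z => !![1, 0; 0, -1]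

/-- The Pauli string associated to a Pauli letter assignment `f : Fin n → PauliLetter`,
given entrywise as the `n`-fold Kronecker product of the single-site matrices. -/
def pauliString {n : ℕ} (f : Fin n → PauliLetter) :
    Matrix (Fin n → Fin 2) (Fin n → Fin 2) ℂ :=
  Matrix.of fun x y => ∏ t, (f t).toMatrix (x t) (y t)

/-- The orbit set `Ω_{p,q,r}`: Pauli letter assignments with exactly `p` letters `X`,
`q` letters `Y`, and `r` letters `Z`. -/
def orbitSet (n p q r : ℕ) : Finset (Fin n → PauliLetter) :=
  univ.filter fun f =>
    (univ.filter fun t => f t = PauliLetter.X).card = p ∧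
    (univ.filter fun t => f t = PauliLetter.Y).card = q ∧
    (univ.filter fun t => f t = PauliLetter.Z).card = r

/-- The Pauli orbit operator `B_{p,q,r} = Σ_{f ∈ Ω_{p,q,r}} M_f`. -/
noncomputable def pauliOrbit (n p q r : ℕ) :
    Matrix (Fin n → Fin 2) (Fin n → Fin 2) ℂ :=
  ∑ f ∈ orbitSet n p q r, pauliString f

/-! ### Auxiliary definitions and lemmas -/

/-- Letterwise product of Pauli letters (forgetting the phase). -/
def lmul : PauliLetter → PauliLetter → PauliLetter
  | .I, a => a
  | .X, .I => .X | .Y, .I => .Y | .Z, .I => .Z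
  | .X, .X => .I | .Y, .Y => .I | .Z, .Z => .I
  | .X, .Y => .Z | .Y, .X => .Z
  | .Y, .Z => .X | .Z, .Y => .X
  | .Z, .X => .Y | .X, .Z => .Y

/-- The phase of the product of two Pauli letters. -/
def lphase : PauliLetter → PauliLetter → ℂ
  | .X, .Y => Complex.I | .Y, .Z => Complex.I | .Z, .X => Complex.I
  | .Y, .X => -Complex.I | .Z, .Y => -Complex.I | .X, .Z => -Complex.I
  | _, _ => 1

lemma lmul_comm (a b : PauliLetter) : lmul a b = lmul b a := by cases a <;> cases b <;> rfl

lemma lphase_swap (a b : PauliLetter) : lphase b a = star (lphase a b) := by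
  cases a <;> cases b <;> simp [lphase]

lemma toMatrix_mul (a b : PauliLetter) :
    a.toMatrix * b.toMatrix = lphase a b • (lmul a b).toMatrix := by
  cases a <;> cases b <;>
    · ext i j
      fin_cases i <;> fin_cases j <;>
        simp [PauliLetter.toMatrix, lmul, lphase, Matrix.mul_apply, Fin.sum_univ_two]

/-- Global phase of the product of two Pauli strings. -/
noncomputable def cph {n : ℕ} (f g : Fin n → PauliLetter) : ℂ := ∏ t, lphase (f t) (g t)

lemma cph_swap {n : ℕ} (f g : Fin n → PauliLetter) : cph g f = star (cph f g) := by
  unfold cph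
  rw [star_prod]
  exact Finset.prod_congr rfl fun t _ => lphase_swap (f t) (g t)

lemma cph_comp {n : ℕ} (f g : Fin n → PauliLetter) (σ : Equiv.Perm (Fin n)) :
    cph (f ∘ σ) (g ∘ σ) = cph f g :=
  Equiv.prod_comp σ (fun t => lphase (f t) (g t))

lemma pauliString_mul {n : ℕ} (f g : Fin n → PauliLetter) :
    pauliString f * pauliString g =
      cph f g • pauliString (fun t => lmul (f t) (g t)) := by
  ext x y
  simp only [Matrix.mul_apply, pauliString, Matrix.of_apply, Matrix.smul_apply, smul_eq_mul, cph]
  have h1 : ∀ z : Fin n → Fin 2,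
      (∏ t, (f t).toMatrix (x t) (z t)) * ∏ t, (g t).toMatrix (z t) (y t)
        = ∏ t, (f t).toMatrix (x t) (z t) * (g t).toMatrix (z t) (y t) := fun z =>
    (Finset.prod_mul_distrib).symm
  rw [Finset.sum_congr rfl fun z _ => h1 z]
  have h2 : ∑ z : Fin n → Fin 2, ∏ t, (f t).toMatrix (x t) (z t) * (g t).toMatrix (z t) (y t)
      = ∏ t, ∑ k : Fin 2, (f t).toMatrix (x t) k * (g t).toMatrix k (y t) := by
    rw [Finset.prod_univ_sum]
    exact (Fintype.sum_equiv (Equiv.refl _) _ _ fun z => rfl)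
  rw [h2]
  have h3 : ∀ t, ∑ k : Fin 2, (f t).toMatrix (x t) k * (g t).toMatrix k (y t)
      = lphase (f t) (g t) * (lmul (f t) (g t)).toMatrix (x t) (y t) := by
    intro t
    have := congrFun (congrFun (toMatrix_mul (f t) (g t)) (x t)) (y t)
    simpa [Matrix.mul_apply, Matrix.smul_apply] using this
  rw [Finset.prod_congr rfl fun t _ => h3 t, Finset.prod_mul_distrib]

/-- The number of sites at which `f` carries the letter `L`. -/
def cnt {n : ℕ} (f : Fin n → PauliLetter) (L : PauliLetter) : ℕ :=
  (univ.filter fun t => f t = L).card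

lemma mem_orbitSet {n a b c : ℕ} {f : Fin n → PauliLetter} :
    f ∈ orbitSet n a b c ↔ cnt f .X = a ∧ cnt f .Y = b ∧ cnt f .Z = c := by
  simp [orbitSet, cnt]

lemma cnt_comp {n : ℕ} (f : Fin n → PauliLetter) (σ : Equiv.Perm (Fin n)) (L : PauliLetter) :
    cnt (f ∘ σ) L = cnt f L := by
  unfold cnt
  apply Finset.card_bij (fun t _ => σ t)
  · intro a ha; simp only [mem_filter, mem_univ, true_and] at ha ⊢; exact ha
  · intro a _ b _ hab; exact σ.injective hab
  · intro b hb
    refine ⟨σ.symm b, ?_, by simp⟩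
    simp only [mem_filter, mem_univ, true_and, Function.comp_apply] at hb ⊢
    simpa using hb

lemma cnt_sum {n : ℕ} (f : Fin n → PauliLetter) :
    cnt f .I + cnt f .X + cnt f .Y + cnt f .Z = n := by
  have h := Finset.card_eq_sum_card_fiberwise
    (f := f) (s := univ) (t := (univ : Finset PauliLetter)) (fun t _ => mem_univ _)
  simp only [card_univ, Fintype.card_fin] at h
  have h1 : ∑ L : PauliLetter, cnt f L = n := by simpa [cnt] using h.symm
  have h2 : ∑ L : PauliLetter, cnt f L
      = cnt f .I + (cnt f .X + (cnt f .Y + (cnt f .Z + 0))) := rfl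
  omega

lemma exists_perm {n : ℕ} (f g : Fin n → PauliLetter)
    (hc : ∀ L, cnt f L = cnt g L) : ∃ σ : Equiv.Perm (Fin n), f = g ∘ σ := by
  have hcard : ∀ L, Fintype.card {t // f t = L} = Fintype.card {t // g t = L} := by
    intro L
    simp only [Fintype.card_subtype]
    exact hc L
  let e : ∀ L, {t // f t = L} ≃ {t // g t = L} := fun L => Fintype.equivOfCardEq (hcard L)
  refine ⟨(Equiv.sigmaFiberEquiv f).symm.trans
    ((Equiv.sigmaCongrRight e).trans (Equiv.sigmaFiberEquiv g)), ?_⟩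
  funext t
  simp only [Function.comp_apply, Equiv.trans_apply, Equiv.sigmaFiberEquiv,
    Equiv.sigmaCongrRight, Equiv.coe_fn_mk, Equiv.coe_fn_symm_mk]
  exact (e (f t) ⟨t, rfl⟩).prop.symm

/-- The coefficient of `pauliString h` in the commutator `[B_{p,q,r}, B_{p',q',r'}]`. -/
noncomputable def coeffFun (n p q r p' q' r' : ℕ) (h : Fin n → PauliLetter) : ℂ :=
  ∑ pr ∈ ((orbitSet n p q r) ×ˢ (orbitSet n p' q' r')).filter
      (fun pr => (fun t => lmul (pr.1 t) (pr.2 t)) = h),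
    (cph pr.1 pr.2 - cph pr.2 pr.1)

lemma coeffFun_comp (n p q r p' q' r' : ℕ) (h : Fin n → PauliLetter) (σ : Equiv.Perm (Fin n)) :
    coeffFun n p q r p' q' r' (h ∘ σ) = coeffFun n p q r p' q' r' h := by
  unfold coeffFun
  refine Finset.sum_nbij' (fun pr => (pr.1 ∘ σ.symm, pr.2 ∘ σ.symm))
    (fun pr => (pr.1 ∘ σ, pr.2 ∘ σ)) ?_ ?_ ?_ ?_ ?_
  · rintro ⟨f, g⟩ hm
    simp only [mem_filter, mem_product, mem_orbitSet] at hm ⊢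
    obtain ⟨⟨hf, hg⟩, hfg⟩ := hm
    refine ⟨⟨?_, ?_⟩, ?_⟩
    · simpa only [cnt_comp] using hf
    · simpa only [cnt_comp] using hg
    · funext t
      have := congrFun hfg (σ.symm t)
      simpa using this
  · rintro ⟨f, g⟩ hm
    simp only [mem_filter, mem_product, mem_orbitSet] at hm ⊢
    obtain ⟨⟨hf, hg⟩, hfg⟩ := hm
    refine ⟨⟨?_, ?_⟩, ?_⟩
    · simpa only [cnt_comp] using hf
    · simpa only [cnt_comp] using hg
    · funext t
      have := congrFun hfg (σ t)
      simpa using this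
  · rintro ⟨f, g⟩ _
    simp only [Prod.mk.injEq]
    constructor <;> · funext t; simp
  · rintro ⟨f, g⟩ _
    simp only [Prod.mk.injEq]
    constructor <;> · funext t; simp
  · rintro ⟨f, g⟩ _
    simp only
    rw [cph_comp f g σ.symm, cph_comp g f σ.symm]

lemma coeffFun_const {n p q r p' q' r' a b c : ℕ} {h h0 : Fin n → PauliLetter}
    (hh : h ∈ orbitSet n a b c) (hh0 : h0 ∈ orbitSet n a b c) :
    coeffFun n p q r p' q' r' h = coeffFun n p q r p' q' r' h0 := by
  rw [mem_orbitSet] at hh hh0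
  have hc : ∀ L, cnt h L = cnt h0 L := by
    have s1 := cnt_sum h
    have s2 := cnt_sum h0
    intro L
    cases L <;> omega
  obtain ⟨σ, hσ⟩ := exists_perm h h0 hc
  rw [hσ]
  exact coeffFun_comp n p q r p' q' r' h0 σ

lemma coeffFun_im (n p q r p' q' r' : ℕ) (h : Fin n → PauliLetter) :
    (Complex.I * coeffFun n p q r p' q' r' h).im = 0 := by
  unfold coeffFun
  rw [Finset.mul_sum, Complex.im_sum]
  refine Finset.sum_eq_zero fun pr _ => ?_
  rw [cph_swap pr.2 pr.1]
  simp [Complex.mul_im, Complex.ext_iff]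

lemma commutator_eq (n p q r p' q' r' : ℕ) :
    pauliOrbit n p q r * pauliOrbit n p' q' r' - pauliOrbit n p' q' r' * pauliOrbit n p q r
      = ∑ h : Fin n → PauliLetter, coeffFun n p q r p' q' r' h • pauliString h := by
  unfold pauliOrbit
  rw [Finset.sum_mul_sum, Finset.sum_mul_sum]
  have key : ∑ f ∈ orbitSet n p q r, ∑ g ∈ orbitSet n p' q' r',
        pauliString f * pauliString g
      - ∑ g ∈ orbitSet n p' q' r', ∑ f ∈ orbitSet n p q r,
        pauliString g * pauliString f
      = ∑ pr ∈ (orbitSet n p q r) ×ˢ (orbitSet n p' q' r'),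
          (cph pr.1 pr.2 - cph pr.2 pr.1) • pauliString (fun t => lmul (pr.1 t) (pr.2 t)) := by
    rw [Finset.sum_comm (s := orbitSet n p' q' r') (t := orbitSet n p q r)]
    simp only [← Finset.sum_sub_distrib]
    rw [← Finset.sum_product' (s := orbitSet n p q r) (t := orbitSet n p' q' r')
      (f := fun f g => pauliString f * pauliString g - pauliString g * pauliString f)]
    refine Finset.sum_congr rfl fun pr _ => ?_
    rw [pauliString_mul pr.1 pr.2, pauliString_mul pr.2 pr.1]
    have : (fun t => lmul (pr.2 t) (pr.1 t)) = fun t => lmul (pr.1 t) (pr.2 t) := by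
      funext t; exact lmul_comm _ _
    rw [this, sub_smul]
  rw [key]
  rw [← Finset.sum_fiberwise_of_maps_to
    (g := fun pr : (Fin n → PauliLetter) × (Fin n → PauliLetter) => fun t => lmul (pr.1 t) (pr.2 t))
    (t := (univ : Finset (Fin n → PauliLetter))) (fun _ _ => mem_univ _)]
  refine Finset.sum_congr rfl fun h _ => ?_
  rw [coeffFun, Finset.sum_smul]
  refine Finset.sum_congr rfl fun pr hpr => ?_
  simp only [mem_filter] at hpr
  rw [hpr.2]

lemma orbit_fiber_eq (n : ℕ) (T : ℕ × ℕ × ℕ) :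
    (univ : Finset (Fin n → PauliLetter)).filter
        (fun h => (cnt h .X, cnt h .Y, cnt h .Z) = T)
      = orbitSet n T.1 T.2.1 T.2.2 := by
  ext h
  simp [mem_orbitSet, Prod.ext_iff]

/-- The commutator of two Pauli orbits closes in the Pauli orbit basis: it lies in the ℂ-span
of the orbit family, and `i` times it lies in the ℝ-span (the coefficients are purely
imaginary). -/
theorem pauliOrbit_commutator_closes (n : ℕ) (hn : 1 ≤ n) (p q r p' q' r' : ℕ)
    (h : p + q + r ≤ n) (h' : p' + q' + r' ≤ n) :
    (pauliOrbit n p q r * pauliOrbit n p' q' r' -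
        pauliOrbit n p' q' r' * pauliOrbit n p q r) ∈
      Submodule.span ℂ
        {B | ∃ pt qt rt : ℕ, pt + qt + rt ≤ n ∧ B = pauliOrbit n pt qt rt} ∧
    Complex.I • (pauliOrbit n p q r * pauliOrbit n p' q' r' -
        pauliOrbit n p' q' r' * pauliOrbit n p q r) ∈
      Submodule.span ℝ
        {B | ∃ pt qt rt : ℕ, pt + qt + rt ≤ n ∧ B = pauliOrbit n pt qt rt} := by
  classical
  set S : Set (Matrix (Fin n → Fin 2) (Fin n → Fin 2) ℂ) :=
    {B | ∃ pt qt rt : ℕ, pt + qt + rt ≤ n ∧ B = pauliOrbit n pt qt rt} with hS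
  set trips : Finset (ℕ × ℕ × ℕ) :=
    (Finset.range (n+1)) ×ˢ (Finset.range (n+1)) ×ˢ (Finset.range (n+1)) with htrips
  have hmaps : ∀ h0 : Fin n → PauliLetter, h0 ∈ (univ : Finset (Fin n → PauliLetter)) →
      (cnt h0 .X, cnt h0 .Y, cnt h0 .Z) ∈ trips := by
    intro h0 _
    have hle : ∀ L, cnt h0 L ≤ n := fun L => by
      have := Finset.card_filter_le (univ : Finset (Fin n)) (fun t => h0 t = L)
      simpa [cnt] using this
    simp only [htrips, mem_product, mem_range]
    exact ⟨Nat.lt_succ_of_le (hle _), Nat.lt_succ_of_le (hle _), Nat.lt_succ_of_le (hle _)⟩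
  have hdecomp : pauliOrbit n p q r * pauliOrbit n p' q' r' -
        pauliOrbit n p' q' r' * pauliOrbit n p q r
      = ∑ T ∈ trips, ∑ h0 ∈ orbitSet n T.1 T.2.1 T.2.2,
          coeffFun n p q r p' q' r' h0 • pauliString h0 := by
    rw [commutator_eq]
    rw [← Finset.sum_fiberwise_of_maps_to
      (g := fun h0 : Fin n → PauliLetter => (cnt h0 .X, cnt h0 .Y, cnt h0 .Z)) hmaps]
    refine Finset.sum_congr rfl fun T _ => ?_
    rw [orbit_fiber_eq n T]
  -- key representation of each fiber sum
  have hfiber : ∀ T : ℕ × ℕ × ℕ,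
      (∑ h0 ∈ orbitSet n T.1 T.2.1 T.2.2, coeffFun n p q r p' q' r' h0 • pauliString h0)
        ∈ Submodule.span ℂ S ∧
      Complex.I • (∑ h0 ∈ orbitSet n T.1 T.2.1 T.2.2,
          coeffFun n p q r p' q' r' h0 • pauliString h0) ∈ Submodule.span ℝ S := by
    rintro ⟨a, ⟨b, c⟩⟩
    by_cases hne : (orbitSet n a b c).Nonempty
    · obtain ⟨h0, hh0⟩ := hne
      have habc : a + b + c ≤ n := by
        rw [mem_orbitSet] at hh0
        have := cnt_sum h0
        omega
      have hBS : pauliOrbit n a b c ∈ S := ⟨a, b, c, habc, rfl⟩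
      have hsum : (∑ h1 ∈ orbitSet n a b c, coeffFun n p q r p' q' r' h1 • pauliString h1)
          = coeffFun n p q r p' q' r' h0 • pauliOrbit n a b c := by
        rw [pauliOrbit, Finset.smul_sum]
        exact Finset.sum_congr rfl fun h1 hh1 => by
          rw [coeffFun_const hh1 hh0]
      constructor
      · rw [hsum]
        exact Submodule.smul_mem _ _ (Submodule.subset_span hBS)
      · rw [hsum, smul_smul]
        have him := coeffFun_im n p q r p' q' r' h0
        have : Complex.I * coeffFun n p q r p' q' r' h0
            = ((Complex.I * coeffFun n p q r p' q' r' h0).re : ℝ) := by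
          apply Complex.ext <;> simp [him]
        rw [this, Complex.coe_smul]
        exact Submodule.smul_mem _ _ (Submodule.subset_span hBS)
    · rw [Finset.not_nonempty_iff_eq_empty] at hne
      simp only [hne, Finset.sum_empty, smul_zero]
      exact ⟨Submodule.zero_mem _, Submodule.zero_mem _⟩
  constructor
  · rw [hdecomp]
    exact Submodule.sum_mem _ fun T _ => (hfiber T).1
  · rw [hdecomp, Finset.smul_sum]
    exact Submodule.sum_mem _ fun T _ => (hfiber T).2
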